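/- Suppose the edges of K_n are 3-colored and there is no set of at most 4 vertices strongly c-dominating at least 2n/3 vertices for any color c. If additionally every vertex is incident with edges of at most two colors, then a contradiction follows; i.e., under the two-colors-per-vertex condition, some set of exactly 2 vertices strongly c-dominates at least 2n/3 vertices for some color c (n ≥ 2). -/

import Mathlib

open Finset

/-- The set of colors appearing on edges incident with `v`. -/
def colorsAt {V : Type*} [Fintype V] [DecidableEq V]
    (col : V → V → Fin 3) (v : V) : Finset (Fin 3) :=
  Finset.univ.filter (fun c => ∃ u, u ≠ v ∧ col v u = c)

/-- The set of vertices strongly `c`-dominated by `A`. -/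
def sdom {V : Type*} [Fintype V] [DecidableEq V]
    (col : V → V → Fin 3) (A : Finset V) (c : Fin 3) : Finset V :=
  Finset.univ.filter (fun y => ∃ x ∈ A, x ≠ y ∧ col x y = c)

/-- Vertices missing color `c`. -/
def missW {V : Type*} [Fintype V] [DecidableEq V]
    (col : V → V → Fin 3) (c : Fin 3) : Finset V :=
  Finset.univ.filter (fun x => c ∉ colorsAt col x)

lemma mem_colorsAt_of {V : Type*} [Fintype V] [DecidableEq V]
    (col : V → V → Fin 3) {v u : V} (h : u ≠ v) : col v u ∈ colorsAt col v := by
  simp only [colorsAt, mem_filter, mem_univ, true_and]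
  exact ⟨u, h, rfl⟩

lemma three_colors : ∀ a b : Fin 3, a ≠ b →
    ∃ e : Fin 3, e ≠ a ∧ e ≠ b ∧ ∀ d : Fin 3, d ≠ a → d ≠ b → d = e := by decide

lemma two_colors : ∀ a : Fin 3, ∃ c c' : Fin 3, c ≠ c' ∧
    ∀ d : Fin 3, d ≠ a → (d = c ∨ d = c') := by decide

lemma fin3_cases : ∀ d : Fin 3, d = 0 ∨ d = 1 ∨ d = 2 := by decide

/-- Submodularity-style covering bound. -/
lemma three_cover {V : Type*} [DecidableEq V] (s t u : Finset V) :
    2 * (s ∪ t ∪ u).card ≤ (s ∪ t).card + (s ∪ u).card + (t ∪ u).card := by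
  have h1 : ((s ∪ t) ∪ (s ∪ u)).card + ((s ∪ t) ∩ (s ∪ u)).card
      = (s ∪ t).card + (s ∪ u).card := Finset.card_union_add_card_inter _ _
  have e1 : (s ∪ t) ∪ (s ∪ u) = s ∪ t ∪ u := by
    ext x; simp only [mem_union]; tauto
  have h2 : (s ∪ t ∪ u) ⊆ ((s ∪ t) ∩ (s ∪ u)) ∪ (t ∪ u) := by
    intro x hx
    simp only [mem_union, mem_inter] at hx ⊢
    tauto
  have h3 := Finset.card_le_card h2
  have h4 := Finset.card_union_le ((s ∪ t) ∩ (s ∪ u)) (t ∪ u)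
  rw [e1] at h1
  omega

/-- Case I: two vertices with different missing colors dominate the union of
the corresponding classes in the third color. -/
lemma caseI {n : ℕ} (col : Fin n → Fin n → Fin 3)
    (hsym : ∀ x y, col x y = col y x)
    {a b : Fin 3} (hab : a ≠ b) {u v : Fin n} (huv : u ≠ v)
    (hu : a ∉ colorsAt col u) (hv : b ∉ colorsAt col v)
    (hbig : 2 * n ≤ 3 * (missW col a ∪ missW col b).card) :
    ∃ (c : Fin 3) (A : Finset (Fin n)),
      A.card = 2 ∧ 2 * n ≤ 3 * (sdom col A c).card := by
  obtain ⟨e, hea, heb, he⟩ := three_colors a b hab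
  refine ⟨e, {u, v}, Finset.card_pair huv, ?_⟩
  refine le_trans hbig (Nat.mul_le_mul_left 3 (Finset.card_le_card ?_))
  intro y hy
  simp only [missW, mem_union, mem_filter, mem_univ, true_and] at hy
  simp only [sdom, mem_filter, mem_univ, true_and]
  rcases hy with hya | hyb
  · by_cases hyv : y = v
    · subst hyv
      refine ⟨u, by simp, huv, ?_⟩
      refine he _ (fun h => hu ?_) (fun h => hv ?_)
      · exact h ▸ mem_colorsAt_of col (Ne.symm huv)
      · rw [hsym] at h; exact h ▸ mem_colorsAt_of col huv
    · refine ⟨v, by simp, Ne.symm hyv, ?_⟩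
      refine he _ (fun h => hya ?_) (fun h => hv ?_)
      · rw [hsym] at h; exact h ▸ mem_colorsAt_of col (Ne.symm hyv)
      · exact h ▸ mem_colorsAt_of col hyv
  · by_cases hyu : y = u
    · subst hyu
      refine ⟨v, by simp, Ne.symm huv, ?_⟩
      refine he _ (fun h => hu ?_) (fun h => hv ?_)
      · rw [hsym] at h; exact h ▸ mem_colorsAt_of col (Ne.symm huv)
      · exact h ▸ mem_colorsAt_of col huv
    · refine ⟨u, by simp, Ne.symm hyu, ?_⟩
      refine he _ (fun h => hu ?_) (fun h => hyb ?_)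
      · exact h ▸ mem_colorsAt_of col hyu
      · rw [hsym] at h; exact h ▸ mem_colorsAt_of col (Ne.symm hyu)

/-- Degenerate case: some color appears on no edge at all.  A counting
argument produces a good pair. -/
lemma degen {n : ℕ} (hn : 2 ≤ n) (col : Fin n → Fin n → Fin 3)
    (hsym : ∀ x y, col x y = col y x)
    {a : Fin 3} (ha : ∀ x y : Fin n, x ≠ y → col x y ≠ a) :
    ∃ (c : Fin 3) (A : Finset (Fin n)),
      A.card = 2 ∧ 2 * n ≤ 3 * (sdom col A c).card := by
  by_contra hcon
  push_neg at hcon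
  obtain ⟨c, c', hcc, hoth⟩ := two_colors a
  have hn0 : 0 < n := by omega
  set u : Fin n := ⟨0, hn0⟩ with hu
  set A : Finset (Fin n) := Finset.univ.filter (fun y => y ≠ u ∧ col u y = c) with hA
  set U : Finset (Fin n) := Finset.univ.filter (fun y => y ≠ u ∧ col u y = c') with hU
  have huA : u ∉ A := by simp [hA]
  have huU : u ∉ U := by simp [hU]
  have hdisj : Disjoint A U := by
    rw [Finset.disjoint_left]
    intro z hz hz'
    simp only [hA, hU, mem_filter, mem_univ, true_and] at hz hz'
    exact hcc (hz.2 ▸ hz'.2 ▸ rfl)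
  have hpart : Finset.univ = insert u (A ∪ U) := by
    ext y
    simp only [mem_univ, mem_insert, mem_union, hA, hU, mem_filter, true_iff, true_and]
    by_cases hyu : y = u
    · exact Or.inl hyu
    · right
      rcases hoth (col u y) (ha u y (Ne.symm hyu)) with h | h
      · exact Or.inl ⟨hyu, h⟩
      · exact Or.inr ⟨hyu, h⟩
  have hcardn : n = A.card + U.card + 1 := by
    have h1 : (Finset.univ : Finset (Fin n)).card = n := by simp
    rw [hpart, Finset.card_insert_of_notMem (by simp [huA, huU]),
      Finset.card_union_of_disjoint hdisj] at h1
    omega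
  -- per-vertex inequalities
  have key1 : ∀ v ∈ A, 3 * (U.filter (fun y => col v y = c)).card + 3 * A.card + 4 ≤ 2 * n := by
    intro v hv
    have hv' : v ≠ u ∧ col u v = c := by simpa [hA] using hv
    have hsub : A ∪ insert u (U.filter (fun y => col v y = c)) ⊆ sdom col {u, v} c := by
      intro y hy
      simp only [sdom, mem_filter, mem_univ, true_and]
      rcases mem_union.1 hy with hyA | hyI
      · have hy' : y ≠ u ∧ col u y = c := by simpa [hA] using hyA
        exact ⟨u, by simp, Ne.symm hy'.1, hy'.2⟩
      · rcases mem_insert.1 hyI with hyu | hyF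
        · subst hyu
          exact ⟨v, by simp, hv'.1, by rw [← hsym]; exact hv'.2⟩
        · have hyU := (mem_filter.1 hyF).1
          have hyc := (mem_filter.1 hyF).2
          have hvy : v ≠ y := by
            intro h
            exact (Finset.disjoint_left.1 hdisj hv) (h ▸ hyU)
          exact ⟨v, by simp, hvy, hyc⟩
    have hdisj2 : Disjoint A (insert u (U.filter (fun y => col v y = c))) := by
      rw [Finset.disjoint_left]
      intro z hz hz'
      rcases mem_insert.1 hz' with h | h
      · exact huA (h ▸ hz)
      · exact (Finset.disjoint_left.1 hdisj hz) (mem_filter.1 h).1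
    have hcard : (A ∪ insert u (U.filter (fun y => col v y = c))).card
        = A.card + ((U.filter (fun y => col v y = c)).card + 1) := by
      rw [Finset.card_union_of_disjoint hdisj2,
        Finset.card_insert_of_notMem (fun h => huU (mem_filter.1 h).1)]
    have hle := Finset.card_le_card hsub
    have hlt := hcon c {u, v} (Finset.card_pair (Ne.symm hv'.1))
    omega
  have key2 : ∀ y ∈ U, 3 * (A.filter (fun v => col y v = c')).card + 3 * U.card + 4 ≤ 2 * n := by
    intro y hy
    have hy' : y ≠ u ∧ col u y = c' := by simpa [hU] using hy
    have hsub : U ∪ insert u (A.filter (fun v => col y v = c')) ⊆ sdom col {u, y} c' := by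
      intro z hz
      simp only [sdom, mem_filter, mem_univ, true_and]
      rcases mem_union.1 hz with hzU | hzI
      · have hz' : z ≠ u ∧ col u z = c' := by simpa [hU] using hzU
        exact ⟨u, by simp, Ne.symm hz'.1, hz'.2⟩
      · rcases mem_insert.1 hzI with hzu | hzF
        · subst hzu
          exact ⟨y, by simp, hy'.1, by rw [← hsym]; exact hy'.2⟩
        · have hzA := (mem_filter.1 hzF).1
          have hzc := (mem_filter.1 hzF).2
          have hyz : y ≠ z := by
            intro h
            exact (Finset.disjoint_left.1 hdisj hzA) (h ▸ hy)
          exact ⟨y, by simp, hyz, hzc⟩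
    have hdisj2 : Disjoint U (insert u (A.filter (fun v => col y v = c'))) := by
      rw [Finset.disjoint_left]
      intro z hz hz'
      rcases mem_insert.1 hz' with h | h
      · exact huU (h ▸ hz)
      · exact (Finset.disjoint_left.1 hdisj (mem_filter.1 h).1) hz
    have hcard : (U ∪ insert u (A.filter (fun v => col y v = c'))).card
        = U.card + ((A.filter (fun v => col y v = c')).card + 1) := by
      rw [Finset.card_union_of_disjoint hdisj2,
        Finset.card_insert_of_notMem (fun h => huA (mem_filter.1 h).1)]
    have hle := Finset.card_le_card hsub
    have hlt := hcon c' {u, y} (Finset.card_pair (Ne.symm hy'.1))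
    omega
  -- sum the inequalities
  set α := A.card with hα
  set β := U.card with hβ
  set T := ∑ v ∈ A, (U.filter (fun y => col v y = c)).card with hT
  set S := ∑ y ∈ U, (A.filter (fun v => col y v = c')).card with hS
  have hsum1 : 3 * T + 3 * α * α + 4 * α ≤ 2 * n * α := by
    have h := Finset.sum_le_sum key1
    rw [Finset.sum_add_distrib, Finset.sum_add_distrib, ← Finset.mul_sum,
      Finset.sum_const, Finset.sum_const, Finset.sum_const, smul_eq_mul, smul_eq_mul,
      smul_eq_mul, ← hT, ← hα] at h
    nlinarith [h]
  have hsum2 : 3 * S + 3 * β * β + 4 * β ≤ 2 * n * β := by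
    have h := Finset.sum_le_sum key2
    rw [Finset.sum_add_distrib, Finset.sum_add_distrib, ← Finset.mul_sum,
      Finset.sum_const, Finset.sum_const, Finset.sum_const, smul_eq_mul, smul_eq_mul,
      smul_eq_mul, ← hS, ← hβ] at h
    nlinarith [h]
  -- edge counting identity
  have hTS : T + S = α * β := by
    have hT' : T = ∑ v ∈ A, ∑ y ∈ U, (if col v y = c then 1 else 0) := by
      rw [hT]
      exact Finset.sum_congr rfl (fun v _ => Finset.card_filter _ _)
    have hS' : S = ∑ y ∈ U, ∑ v ∈ A, (if col y v = c' then 1 else 0) := by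
      rw [hS]
      exact Finset.sum_congr rfl (fun y _ => Finset.card_filter _ _)
    rw [Finset.sum_comm] at hS'
    rw [hT', hS', ← Finset.sum_add_distrib]
    have hone : ∀ v ∈ A, (∑ y ∈ U, ((if col v y = c then 1 else 0)
        + (if col y v = c' then 1 else 0))) = β := by
      intro v hv
      rw [hβ, Finset.card_eq_sum_ones]
      refine Finset.sum_congr rfl (fun y hy => ?_)
      have hvy : v ≠ y := by
        intro h
        exact (Finset.disjoint_left.1 hdisj hv) (h ▸ hy)
      have hsymvy : col y v = col v y := (hsym y v)
      rcases hoth (col v y) (ha v y hvy) with h | h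
      · rw [h, hsymvy, h, if_pos rfl, if_neg (fun hh => hcc hh)]
      · rw [h, hsymvy, h, if_neg (fun hh => hcc hh.symm), if_pos rfl]
    have hmerge : ∀ v ∈ A, ((∑ y ∈ U, if col v y = c then 1 else 0)
        + ∑ y ∈ U, if col y v = c' then 1 else 0) = β := by
      intro v hv
      rw [← Finset.sum_add_distrib]
      exact hone v hv
    rw [Finset.sum_congr rfl hmerge, Finset.sum_const, smul_eq_mul, ← hα]
  -- final contradiction
  have haux : α * β ≤ α * α + β * β := by
    rcases le_total α β with h | h
    · calc α * β ≤ β * β := Nat.mul_le_mul_right β h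
        _ ≤ α * α + β * β := Nat.le_add_left _ _
    · calc α * β ≤ α * α := Nat.mul_le_mul_left α h
        _ ≤ α * α + β * β := Nat.le_add_right _ _
  nlinarith [hsum1, hsum2, hTS, haux, hcardn, hn]

lemma exists_missing {n : ℕ} (col : Fin n → Fin n → Fin 3)
    (hcol : ∀ v, (colorsAt col v).card ≤ 2) (x : Fin n) :
    ∃ cx, cx ∉ colorsAt col x := by
  by_contra h
  push_neg at h
  have hsub : (Finset.univ : Finset (Fin 3)) ⊆ colorsAt col x := fun c _ => h c
  have := Finset.card_le_card hsub
  simp only [Finset.card_univ, Fintype.card_fin] at this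
  have := hcol x
  omega

lemma bigSingle {n : ℕ} (hn : 2 ≤ n) (col : Fin n → Fin n → Fin 3)
    (hsym : ∀ x y, col x y = col y x)
    (hcol : ∀ v, (colorsAt col v).card ≤ 2)
    {a : Fin 3} (hbig : 2 * n ≤ 3 * (missW col a).card) :
    ∃ (c : Fin 3) (A : Finset (Fin n)),
      A.card = 2 ∧ 2 * n ≤ 3 * (sdom col A c).card := by
  by_cases hd : ∃ d : Fin 3, d ≠ a ∧ (missW col d).Nonempty
  · obtain ⟨d, hda, v, hv⟩ := hd
    have h2 : 1 < (missW col a).card := by omega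
    obtain ⟨w, hw, hwv⟩ := Finset.exists_mem_ne h2 v
    have hwa : a ∉ colorsAt col w := by simpa [missW] using hw
    have hvd : d ∉ colorsAt col v := by simpa [missW] using hv
    refine caseI col hsym (Ne.symm hda) hwv hwa hvd ?_
    exact le_trans hbig (Nat.mul_le_mul_left 3
      (Finset.card_le_card Finset.subset_union_left))
  · push_neg at hd
    refine degen hn col hsym (a := a) ?_
    intro x y hxy hcxy
    have hax : a ∈ colorsAt col x := by
      simp only [colorsAt, mem_filter, mem_univ, true_and]
      exact ⟨y, Ne.symm hxy, hcxy⟩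
    obtain ⟨cx, hcx⟩ := exists_missing col hcol x
    have hcxa : cx ≠ a := fun h => hcx (h ▸ hax)
    have hxm : x ∈ missW col cx := by simp [missW, hcx]
    have := hd cx hcxa
    rw [this] at hxm
    exact absurd hxm (Finset.notMem_empty x)

lemma mainPair {n : ℕ} (hn : 2 ≤ n) (col : Fin n → Fin n → Fin 3)
    (hsym : ∀ x y, col x y = col y x)
    (hcol : ∀ v, (colorsAt col v).card ≤ 2)
    {a b : Fin 3} (hab : a ≠ b)
    (hbig : 2 * n ≤ 3 * (missW col a ∪ missW col b).card) :
    ∃ (c : Fin 3) (A : Finset (Fin n)),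
      A.card = 2 ∧ 2 * n ≤ 3 * (sdom col A c).card := by
  by_cases hrep : ∃ u ∈ missW col a, ∃ v ∈ missW col b, u ≠ v
  · obtain ⟨u, hu, v, hv, huv⟩ := hrep
    exact caseI col hsym hab huv (by simpa [missW] using hu)
      (by simpa [missW] using hv) hbig
  · push_neg at hrep
    by_cases ha0 : (missW col a).Nonempty
    · by_cases hb0 : (missW col b).Nonempty
      · obtain ⟨x, hx⟩ := ha0
        obtain ⟨y, hy⟩ := hb0
        have hsub : missW col a ∪ missW col b ⊆ {y} := by
          intro z hz
          simp only [Finset.mem_singleton]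
          rcases mem_union.1 hz with h | h
          · exact hrep z h y hy
          · rw [← hrep x hx z h]
            exact hrep x hx y hy
        have := Finset.card_le_card hsub
        simp only [Finset.card_singleton] at this
        omega
      · have hbe : missW col b = ∅ := Finset.not_nonempty_iff_eq_empty.1 hb0
        rw [hbe, Finset.union_empty] at hbig
        exact bigSingle hn col hsym hcol hbig
    · have hae : missW col a = ∅ := Finset.not_nonempty_iff_eq_empty.1 ha0
      rw [hae, Finset.empty_union] at hbig
      exact bigSingle hn col hsym hcol hbig

theorem stmt11 (n : ℕ) (hn : 2 ≤ n) (col : Fin n → Fin n → Fin 3)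
    (hsym : ∀ x y, col x y = col y x)
    (hcol : ∀ v, (colorsAt col v).card ≤ 2) :
    ∃ (c : Fin 3) (A : Finset (Fin n)),
      A.card = 2 ∧ 2 * n ≤ 3 * (sdom col A c).card := by
  have hcov : missW col 0 ∪ missW col 1 ∪ missW col 2 = Finset.univ := by
    refine Finset.eq_univ_of_forall (fun x => ?_)
    obtain ⟨cx, hcx⟩ := exists_missing col hcol x
    have hxm : x ∈ missW col cx := by simp [missW, hcx]
    rcases fin3_cases cx with h | h | h <;> subst h <;>
      simp only [mem_union] <;> tauto
  have h3 := three_cover (missW col 0) (missW col 1) (missW col 2)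
  rw [hcov, Finset.card_univ, Fintype.card_fin] at h3
  have hp : 2 * n ≤ 3 * (missW col 0 ∪ missW col 1).card
      ∨ 2 * n ≤ 3 * (missW col 0 ∪ missW col 2).card
      ∨ 2 * n ≤ 3 * (missW col 1 ∪ missW col 2).card := by omega
  rcases hp with h | h | h
  · exact mainPair hn col hsym hcol (by decide) h
  · exact mainPair hn col hsym hcol (by decide) h
  · exact mainPair hn col hsym hcol (by decide) h
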